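/- Let H be a Hopf algebra over a commutative ring, a, b ∈ H, and Φ a nonempty finite subset of ℕ. Then δ_Φ(ab − ba) = Σ_{Λ ∪ Y = Φ, Λ ∩ Y ≠ ∅} (δ_Λ(a) δ_Y(b) − δ_Y(b) δ_Λ(a)). -/

import Mathlib

/- STATEMENT 4: Let H be a Hopf algebra over a commutative ring, a, b ∈ H, and
Φ a nonempty finite subset of positions. Then
δ_Φ(ab − ba) = Σ_{Λ ∪ Y = Φ, Λ ∩ Y ≠ ∅} (δ_Λ(a) δ_Y(b) − δ_Y(b) δ_Λ(a)). -/

open TensorProduct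

noncomputable section

universe u

/-- A bundled `R`-algebra, used to form iterated tensor powers. -/
structure AlgB (R : Type u) [CommRing R] : Type (u + 1) where
  X : Type u
  [ring : Ring X]
  [alg : Algebra R X]

attribute [instance] AlgB.ring AlgB.alg

section Mach

variable (R H : Type u) [CommRing R] [Ring H] [Algebra R H]

/-- The `n`-th tensor power `H^{⊗ n}` (with `H^{⊗ 0} = R`, `H^{⊗ 1} = H`). -/
def Tpow : ℕ → AlgB R
  | 0 => ⟨R⟩
  | 1 => ⟨H⟩
  | n + 2 => ⟨H ⊗[R] (Tpow (n + 1)).X⟩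

/-- Apply a linear endomorphism of `H` in each tensor slot. -/
def tmap : (n : ℕ) → (Fin n → (H →ₗ[R] H)) → ((Tpow R H n).X →ₗ[R] (Tpow R H n).X)
  | 0, _ => LinearMap.id
  | 1, f => f 0
  | n + 2, f => TensorProduct.map (f 0) (tmap (n + 1) fun i => f i.succ)

/-- The iterated coproduct `Δⁿ : H → H^{⊗ n}`, with `Δ⁰ = ε`, `Δ¹ = id`. -/
def Dit (cu : H →ₗ[R] R) (cm : H →ₗ[R] H ⊗[R] H) : (n : ℕ) → H →ₗ[R] (Tpow R H n).X
  | 0 => cu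
  | 1 => LinearMap.id
  | n + 2 => (TensorProduct.map LinearMap.id (Dit cu cm (n + 1))) ∘ₗ cm

/-- `unit ∘ ε : H → H`. -/
def uem (cu : H →ₗ[R] R) : H →ₗ[R] H := (Algebra.linearMap R H) ∘ₗ cu

/-- `Δ_E : H → H^{⊗ n}`: the iterated coproduct inserted into the slots of `E`,
with units (`unit ∘ ε`) in the slots outside `E`. -/
def DeltaE (cu : H →ₗ[R] R) (cm : H →ₗ[R] H ⊗[R] H) (n : ℕ) (E : Finset (Fin n)) :
    H →ₗ[R] (Tpow R H n).X :=
  (tmap R H n fun i => if i ∈ E then LinearMap.id else uem R H cu) ∘ₗ Dit R H cu cm n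

/-- `δ_E := Σ_{E' ⊆ E} (-1)^{|E| - |E'|} Δ_{E'}`. -/
def deltaE (cu : H →ₗ[R] R) (cm : H →ₗ[R] H ⊗[R] H) (n : ℕ) (E : Finset (Fin n)) :
    H →ₗ[R] (Tpow R H n).X :=
  ∑ E' ∈ E.powerset, ((-1 : ℤ) ^ (E.card - E'.card)) • DeltaE R H cu cm n E'

end Mach

section Aux

variable (R H : Type u) [CommRing R] [Ring H] [Bialgebra R H]

/-- AlgHom version of `tmap`. -/
def tmapA : (n : ℕ) → (Fin n → (H →ₐ[R] H)) → ((Tpow R H n).X →ₐ[R] (Tpow R H n).X)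
  | 0, _ => AlgHom.id R _
  | 1, f => f 0
  | n + 2, f => Algebra.TensorProduct.map (f 0) (tmapA (n + 1) fun i => f i.succ)

lemma tmapA_toLin : ∀ (n : ℕ) (f : Fin n → (H →ₐ[R] H)),
    (tmapA R H n f).toLinearMap = tmap R H n fun i => (f i).toLinearMap
  | 0, _ => rfl
  | 1, _ => rfl
  | n + 2, f => by
    apply TensorProduct.ext'
    intro x y
    have ih := tmapA_toLin (n + 1) (fun i => f i.succ)
    simp only [tmapA, tmap, AlgHom.toLinearMap_apply, Algebra.TensorProduct.map_tmul,
      TensorProduct.map_tmul]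
    rw [← ih]
    rfl

/-- AlgHom version of `Dit`. -/
def DitA : (n : ℕ) → H →ₐ[R] (Tpow R H n).X
  | 0 => Bialgebra.counitAlgHom R H
  | 1 => AlgHom.id R H
  | n + 2 => (Algebra.TensorProduct.map (AlgHom.id R H) (DitA (n + 1))).comp
      (Bialgebra.comulAlgHom R H)

lemma DitA_toLin : ∀ n : ℕ,
    (DitA R H n).toLinearMap = Dit R H Coalgebra.counit Coalgebra.comul n
  | 0 => rfl
  | 1 => rfl
  | n + 2 => by
    have ih := DitA_toLin (n + 1)
    apply LinearMap.ext
    intro x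
    simp only [DitA, Dit, AlgHom.comp_toLinearMap, LinearMap.comp_apply,
      AlgHom.toLinearMap_apply]
    have : (Bialgebra.comulAlgHom R H) x = Coalgebra.comul (R := R) x := rfl
    show (Algebra.TensorProduct.map (AlgHom.id R H) (DitA R H (n + 1)))
        ((Bialgebra.comulAlgHom R H) x)
      = TensorProduct.map LinearMap.id (Dit R H Coalgebra.counit Coalgebra.comul (n + 1))
        (Coalgebra.comul (R := R) x)
    rw [this]
    induction (Coalgebra.comul (R := R) x : H ⊗[R] H) using TensorProduct.induction_on with
    | zero => simp
    | tmul u v =>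
      simp [Algebra.TensorProduct.map_tmul, TensorProduct.map_tmul, ← ih]
    | add u v hu hv => simp [map_add, hu, hv]

end Aux

section Aux2

variable (R H : Type u) [CommRing R] [Ring H] [Bialgebra R H]

/-- AlgHom version of `DeltaE`. -/
def DeltaA (n : ℕ) (E : Finset (Fin n)) : H →ₐ[R] (Tpow R H n).X :=
  (tmapA R H n fun i => if i ∈ E then AlgHom.id R H
    else (Algebra.ofId R H).comp (Bialgebra.counitAlgHom R H)).comp (DitA R H n)

lemma DeltaA_toLin (n : ℕ) (E : Finset (Fin n)) :
    (DeltaA R H n E).toLinearMap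
      = DeltaE R H Coalgebra.counit Coalgebra.comul n E := by
  unfold DeltaA DeltaE
  rw [AlgHom.comp_toLinearMap, tmapA_toLin, DitA_toLin]
  have h : (fun i => ((if i ∈ E then AlgHom.id R H
      else (Algebra.ofId R H).comp (Bialgebra.counitAlgHom R H)) : H →ₐ[R] H).toLinearMap)
      = fun i => if i ∈ E then (LinearMap.id : H →ₗ[R] H) else uem R H Coalgebra.counit := by
    funext i
    split <;> rfl
  rw [h]

lemma DeltaE_mul (n : ℕ) (E : Finset (Fin n)) (a b : H) :
    DeltaE R H Coalgebra.counit Coalgebra.comul n E (a * b)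
      = DeltaE R H Coalgebra.counit Coalgebra.comul n E a *
        DeltaE R H Coalgebra.counit Coalgebra.comul n E b := by
  rw [← DeltaA_toLin]
  exact map_mul (DeltaA R H n E) a b

end Aux2

section Aux3

variable (R H : Type u) [CommRing R] [Ring H] [Algebra R H]

/-- Tail of a subset of `Fin (n+1)` along `Fin.succ`. -/
def ftail {n : ℕ} (E : Finset (Fin (n + 1))) : Finset (Fin n) :=
  E.preimage Fin.succ (Fin.succ_injective n).injOn

lemma mem_ftail {n : ℕ} (E : Finset (Fin (n + 1))) (i : Fin n) :
    i ∈ ftail E ↔ i.succ ∈ E := Finset.mem_preimage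

lemma ftail_disjoint {n : ℕ} {E Y : Finset (Fin (n + 1))} (h : Disjoint E Y) :
    Disjoint (ftail E) (ftail Y) := by
  rw [Finset.disjoint_left] at h ⊢
  intro i hi hi'
  exact h ((mem_ftail E i).1 hi) ((mem_ftail Y i).1 hi')

lemma ftail_subset {n : ℕ} {E Y : Finset (Fin (n + 1))} (h : E ⊆ Y) :
    ftail E ⊆ ftail Y := by
  intro i hi
  exact (mem_ftail Y i).2 (h ((mem_ftail E i).1 hi))

/-- Submodule of elements "supported" on the slots of `E` (scalars elsewhere). -/
def Supp : (n : ℕ) → Finset (Fin n) → Submodule R (Tpow R H n).X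
  | 0, _ => ⊤
  | 1, E => if (0 : Fin 1) ∈ E then ⊤ else 1
  | n + 2, E =>
      Submodule.map₂ (TensorProduct.mk R H (Tpow R H (n + 1)).X)
        (if (0 : Fin (n + 2)) ∈ E then (⊤ : Submodule R H) else 1)
        (Supp (n + 1) (ftail E))

lemma Supp_mono : ∀ (n : ℕ) (E Y : Finset (Fin n)), E ⊆ Y → Supp R H n E ≤ Supp R H n Y
  | 0, _, _, _ => le_top
  | 1, E, Y, h => by
    unfold Supp
    by_cases h0 : (0 : Fin 1) ∈ E
    · rw [if_pos h0, if_pos (h h0)]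
    · rw [if_neg h0]
      split <;> [exact le_top; exact le_rfl]
  | n + 2, E, Y, h => by
    unfold Supp
    refine Submodule.map₂_le_map₂ ?_ (Supp_mono (n + 1) _ _ (ftail_subset h))
    by_cases h0 : (0 : Fin (n + 2)) ∈ E
    · rw [if_pos h0, if_pos (h h0)]
    · rw [if_neg h0]
      split <;> [exact le_top; exact le_rfl]

end Aux3

section Aux4

variable (R : Type u) [CommRing R]

/-- The centralizer of an element, as a submodule. -/
def centS {A : Type u} [Ring A] [Algebra R A] (x : A) : Submodule R A where
  carrier := {y | x * y = y * x}
  add_mem' := by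
    intro y z hy hz
    simp only [Set.mem_setOf_eq] at *
    rw [mul_add, add_mul, hy, hz]
  zero_mem' := by simp
  smul_mem' := by
    intro r y hy
    simp only [Set.mem_setOf_eq] at *
    rw [mul_smul_comm, smul_mul_assoc, hy]

/-- Elements commuting with everything in `p`, as a submodule. -/
def commS {A : Type u} [Ring A] [Algebra R A] (p : Submodule R A) : Submodule R A where
  carrier := {x | ∀ y ∈ p, x * y = y * x}
  add_mem' := by
    intro x z hx hz y hy
    rw [add_mul, mul_add, hx y hy, hz y hy]
  zero_mem' := by simp
  smul_mem' := by
    intro r x hx y hy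
    rw [smul_mul_assoc, mul_smul_comm, hx y hy]

lemma mem_centS {A : Type u} [Ring A] [Algebra R A] (x y : A) :
    y ∈ centS R x ↔ x * y = y * x := Iff.rfl

variable (H : Type u) [Ring H] [Algebra R H]

lemma Supp_comm : ∀ (n : ℕ) (E Y : Finset (Fin n)), Disjoint E Y →
    ∀ x ∈ Supp R H n E, ∀ y ∈ Supp R H n Y, x * y = y * x
  | 0, _, _, _ => fun x _ y _ => mul_comm (G := R) x y
  | 1, E, Y, h => by
    intro x hx y hy
    by_cases h0 : (0 : Fin 1) ∈ E
    · have h0' : (0 : Fin 1) ∉ Y := Finset.disjoint_left.1 h h0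
      unfold Supp at hy
      rw [if_neg h0'] at hy
      obtain ⟨r, rfl⟩ := Submodule.mem_one.1 hy
      exact (Algebra.commutes r x).symm
    · unfold Supp at hx
      rw [if_neg h0] at hx
      obtain ⟨r, rfl⟩ := Submodule.mem_one.1 hx
      exact Algebra.commutes r y
  | n + 2, E, Y, h => by
    suffices hle : Supp R H (n + 2) E ≤ commS R (Supp R H (n + 2) Y) by
      exact fun x hx y hy => hle hx y hy
    show Supp R H (n + 2) E ≤ _
    unfold Supp
    refine Submodule.map₂_le.2 ?_
    intro x₀ hx₀ x' hx'
    intro y hy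
    have key : Submodule.map₂ (TensorProduct.mk R H (Tpow R H (n + 1)).X)
        (if (0 : Fin (n + 2)) ∈ Y then (⊤ : Submodule R H) else 1)
        (Supp R H (n + 1) (ftail Y)) ≤ centS R (x₀ ⊗ₜ[R] x') := by
      refine Submodule.map₂_le.2 ?_
      intro y₀ hy₀ y' hy'
      show ((x₀ ⊗ₜ[R] x') * (y₀ ⊗ₜ[R] y') : H ⊗[R] (Tpow R H (n + 1)).X)
          = (y₀ ⊗ₜ[R] y') * (x₀ ⊗ₜ[R] x')
      rw [Algebra.TensorProduct.tmul_mul_tmul, Algebra.TensorProduct.tmul_mul_tmul]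
      have h1 : x₀ * y₀ = y₀ * x₀ := by
        by_cases h0 : (0 : Fin (n + 2)) ∈ E
        · have h0' : (0 : Fin (n + 2)) ∉ Y := Finset.disjoint_left.1 h h0
          rw [if_neg h0'] at hy₀
          obtain ⟨r, rfl⟩ := Submodule.mem_one.1 hy₀
          exact (Algebra.commutes r x₀).symm
        · rw [if_neg h0] at hx₀
          obtain ⟨r, rfl⟩ := Submodule.mem_one.1 hx₀
          exact Algebra.commutes r y₀
      have h2 : x' * y' = y' * x' :=
        Supp_comm (n + 1) (ftail E) (ftail Y) (ftail_disjoint h) x' hx' y' hy'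
      rw [h1, h2]
    exact key hy

end Aux4

section Aux5

variable (R H : Type u) [CommRing R] [Ring H] [Algebra R H]

lemma tmap_mem_Supp : ∀ (n : ℕ) (E : Finset (Fin n)) (f : Fin n → (H →ₗ[R] H)),
    (∀ i ∉ E, ∀ x : H, f i x ∈ (1 : Submodule R H)) →
    ∀ x, tmap R H n f x ∈ Supp R H n E
  | 0, _, _, _, _ => trivial
  | 1, E, f, hf, x => by
    unfold Supp
    by_cases h0 : (0 : Fin 1) ∈ E
    · rw [if_pos h0]; trivial
    · rw [if_neg h0]
      exact hf 0 h0 x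
  | n + 2, E, f, hf, x => by
    show TensorProduct.map (f 0) (tmap R H (n + 1) fun i => f i.succ) x ∈ _
    induction x using TensorProduct.induction_on with
    | zero => simp only [map_zero]; exact Submodule.zero_mem _
    | tmul u v =>
      rw [TensorProduct.map_tmul]
      refine Submodule.apply_mem_map₂ (TensorProduct.mk R H (Tpow R H (n + 1)).X) ?_ ?_
      · by_cases h0 : (0 : Fin (n + 2)) ∈ E
        · rw [if_pos h0]; trivial
        · rw [if_neg h0]; exact hf 0 h0 u
      · exact tmap_mem_Supp (n + 1) (ftail E) _
          (fun i hi y => hf i.succ (fun hm => hi ((mem_ftail E i).2 hm)) y) v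
    | add u v hu hv => rw [map_add]; exact Submodule.add_mem _ hu hv

lemma DeltaE_mem_Supp (cu : H →ₗ[R] R) (cm : H →ₗ[R] H ⊗[R] H) (n : ℕ)
    (E : Finset (Fin n)) (a : H) :
    DeltaE R H cu cm n E a ∈ Supp R H n E := by
  unfold DeltaE
  rw [LinearMap.comp_apply]
  refine tmap_mem_Supp R H n E _ ?_ _
  intro i hi x
  rw [if_neg hi]
  exact Submodule.mem_one.2 ⟨cu x, rfl⟩

lemma deltaE_mem_Supp (cu : H →ₗ[R] R) (cm : H →ₗ[R] H ⊗[R] H) (n : ℕ)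
    (E : Finset (Fin n)) (a : H) :
    deltaE R H cu cm n E a ∈ Supp R H n E := by
  unfold deltaE
  rw [LinearMap.sum_apply]
  refine Submodule.sum_mem _ ?_
  intro E' hE'
  rw [LinearMap.smul_apply]
  exact zsmul_mem
    (Supp_mono R H n E' E (Finset.mem_powerset.1 hE') (DeltaE_mem_Supp R H cu cm n E' a)) _

end Aux5

section Aux6

variable {α : Type*} [DecidableEq α]

lemma sum_powerset_neg_one_pow_card_sub (s : Finset α) :
    ∑ T ∈ s.powerset, (-1 : ℤ) ^ (s.card - T.card) = if s = ∅ then 1 else 0 := by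
  have h : ∀ T ∈ s.powerset, (-1 : ℤ) ^ (s.card - T.card)
      = (-1 : ℤ) ^ s.card * (-1 : ℤ) ^ T.card := by
    intro T hT
    have hle : T.card ≤ s.card := Finset.card_le_card (Finset.mem_powerset.1 hT)
    have : (-1 : ℤ) ^ (s.card - T.card) * (-1 : ℤ) ^ T.card = (-1 : ℤ) ^ s.card := by
      rw [← pow_add, Nat.sub_add_cancel hle]
    have sq : (-1 : ℤ) ^ T.card * (-1 : ℤ) ^ T.card = 1 := by
      rw [← pow_add]
      exact Even.neg_one_pow ⟨T.card, rfl⟩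
    calc (-1 : ℤ) ^ (s.card - T.card)
        = (-1 : ℤ) ^ (s.card - T.card) * ((-1 : ℤ) ^ T.card * (-1 : ℤ) ^ T.card) := by
          rw [sq, mul_one]
      _ = (-1 : ℤ) ^ s.card * (-1 : ℤ) ^ T.card := by rw [← mul_assoc, this]
  rw [Finset.sum_congr rfl h, ← Finset.mul_sum, Finset.sum_powerset_neg_one_pow_card]
  split
  · next hs => subst hs; simp
  · simp

lemma sum_interval_one (A B : Finset α) (hAB : A ⊆ B) (g : Finset α → ℤ)
    (hg : ∀ C, A ⊆ C → C ⊆ B → g C = (-1 : ℤ) ^ (C.card - A.card)) :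
    ∑ C ∈ B.powerset, (if A ⊆ C then g C else 0) = if A = B then 1 else 0 := by
  rw [← Finset.sum_filter]
  rw [Finset.sum_nbij' (i := fun C => C \ A) (j := fun T => A ∪ T)
    (t := (B \ A).powerset) (g := fun T => (-1 : ℤ) ^ T.card)]
  · rw [Finset.sum_powerset_neg_one_pow_card]
    congr 1
    rw [eq_iff_iff]
    constructor
    · intro h
      exact Finset.Subset.antisymm hAB (Finset.sdiff_eq_empty_iff_subset.1 h)
    · intro h; subst h; simp
  · intro C hC
    rw [Finset.mem_filter, Finset.mem_powerset] at hC
    exact Finset.mem_powerset.2 (Finset.sdiff_subset_sdiff hC.1 Finset.Subset.rfl)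
  · intro T hT
    rw [Finset.mem_powerset] at hT
    rw [Finset.mem_filter, Finset.mem_powerset]
    exact ⟨Finset.union_subset hAB (hT.trans (Finset.sdiff_subset)), Finset.subset_union_left⟩
  · intro C hC
    rw [Finset.mem_filter] at hC
    exact Finset.union_sdiff_of_subset hC.2
  · intro T hT
    rw [Finset.mem_powerset] at hT
    have : Disjoint A T := Finset.disjoint_of_subset_right hT Finset.disjoint_sdiff
    rw [Finset.union_sdiff_cancel_left this]
  · intro C hC
    rw [Finset.mem_filter, Finset.mem_powerset] at hC
    rw [hg C hC.2 hC.1, Finset.card_sdiff_of_subset hC.2]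

lemma sum_interval_two (A B : Finset α) (hAB : A ⊆ B) (g : Finset α → ℤ)
    (hg : ∀ C, A ⊆ C → C ⊆ B → g C = (-1 : ℤ) ^ (B.card - C.card)) :
    ∑ C ∈ B.powerset, (if A ⊆ C then g C else 0) = if A = B then 1 else 0 := by
  rw [← Finset.sum_filter]
  rw [Finset.sum_nbij' (i := fun C => C \ A) (j := fun T => A ∪ T)
    (t := (B \ A).powerset) (g := fun T => (-1 : ℤ) ^ ((B \ A).card - T.card))]
  · rw [sum_powerset_neg_one_pow_card_sub]
    congr 1
    rw [eq_iff_iff]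
    constructor
    · intro h
      exact Finset.Subset.antisymm hAB (Finset.sdiff_eq_empty_iff_subset.1 h)
    · intro h; subst h; simp
  · intro C hC
    rw [Finset.mem_filter, Finset.mem_powerset] at hC
    exact Finset.mem_powerset.2 (Finset.sdiff_subset_sdiff hC.1 Finset.Subset.rfl)
  · intro T hT
    rw [Finset.mem_powerset] at hT
    rw [Finset.mem_filter, Finset.mem_powerset]
    exact ⟨Finset.union_subset hAB (hT.trans (Finset.sdiff_subset)), Finset.subset_union_left⟩
  · intro C hC
    rw [Finset.mem_filter] at hC
    exact Finset.union_sdiff_of_subset hC.2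
  · intro T hT
    rw [Finset.mem_powerset] at hT
    have : Disjoint A T := Finset.disjoint_of_subset_right hT Finset.disjoint_sdiff
    rw [Finset.union_sdiff_cancel_left this]
  · intro C hC
    rw [Finset.mem_filter, Finset.mem_powerset] at hC
    rw [hg C hC.2 hC.1, Finset.card_sdiff_of_subset hC.2, Finset.card_sdiff_of_subset hAB]
    congr 1
    have h1 : A.card ≤ C.card := Finset.card_le_card hC.2
    have h2 : C.card ≤ B.card := Finset.card_le_card hC.1
    omega

end Aux6

section Aux7

lemma sum_powerset_extend {α : Type*} [DecidableEq α] {M : Type*} [AddCommMonoid M]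
    {A B : Finset α} (h : A ⊆ B) (f : Finset α → M) :
    ∑ C ∈ A.powerset, f C = ∑ C ∈ B.powerset, if C ⊆ A then f C else 0 := by
  rw [← Finset.sum_filter]
  congr 1
  ext C
  simp only [Finset.mem_powerset, Finset.mem_filter]
  exact ⟨fun hC => ⟨hC.trans h, hC⟩, fun hC => hC.2⟩

variable (R H : Type u) [CommRing R] [Ring H] [Algebra R H]

lemma Delta_inv (cu : H →ₗ[R] R) (cm : H →ₗ[R] H ⊗[R] H) (n : ℕ)
    (E : Finset (Fin n)) (a : H) :
    DeltaE R H cu cm n E a = ∑ Λ ∈ E.powerset, deltaE R H cu cm n Λ a := by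
  unfold deltaE
  simp only [LinearMap.sum_apply, LinearMap.smul_apply]
  rw [Finset.sum_congr rfl
    (fun Λ hΛ => sum_powerset_extend (Finset.mem_powerset.1 hΛ)
      (fun E' => ((-1 : ℤ) ^ (Λ.card - E'.card)) • DeltaE R H cu cm n E' a))]
  rw [Finset.sum_comm]
  have step : ∀ E' ∈ E.powerset,
      (∑ Λ ∈ E.powerset, if E' ⊆ Λ then
        ((-1 : ℤ) ^ (Λ.card - E'.card)) • DeltaE R H cu cm n E' a else 0)
      = if E' = E then DeltaE R H cu cm n E' a else 0 := by
    intro E' hE'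
    have h1 : (∑ Λ ∈ E.powerset, if E' ⊆ Λ then
        ((-1 : ℤ) ^ (Λ.card - E'.card)) • DeltaE R H cu cm n E' a else 0)
        = (∑ Λ ∈ E.powerset, if E' ⊆ Λ then ((-1 : ℤ) ^ (Λ.card - E'.card)) else 0)
          • DeltaE R H cu cm n E' a := by
      rw [Finset.sum_smul]
      refine Finset.sum_congr rfl ?_
      intro Λ _
      split
      · rfl
      · rw [zero_smul]
    rw [h1, sum_interval_one E' E (Finset.mem_powerset.1 hE') _ (fun C _ _ => rfl)]
    split
    · rw [one_smul]
    · rw [zero_smul]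
  rw [Finset.sum_congr rfl step]
  rw [Finset.sum_eq_single E (fun E' _ hne => if_neg hne) (fun h => absurd (Finset.mem_powerset.2 Finset.Subset.rfl) h)]
  rw [if_pos rfl]

end Aux7

section Aux8

variable (R H : Type u) [CommRing R] [Ring H] [Bialgebra R H]

lemma prod_formula (n : ℕ) (Φ : Finset (Fin n)) (a b : H) :
    deltaE R H Coalgebra.counit Coalgebra.comul n Φ (a * b)
      = ∑ Λ ∈ Φ.powerset, ∑ Y ∈ Φ.powerset,
          if Λ ∪ Y = Φ then
            deltaE R H Coalgebra.counit Coalgebra.comul n Λ a *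
              deltaE R H Coalgebra.counit Coalgebra.comul n Y b
          else 0 := by
  have expand : ∀ E ∈ Φ.powerset,
      ((-1 : ℤ) ^ (Φ.card - E.card)) •
        DeltaE R H Coalgebra.counit Coalgebra.comul n E (a * b)
      = ∑ Λ ∈ Φ.powerset, ∑ Y ∈ Φ.powerset,
          (if Λ ∪ Y ⊆ E then
            ((-1 : ℤ) ^ (Φ.card - E.card)) •
              (deltaE R H Coalgebra.counit Coalgebra.comul n Λ a *
                deltaE R H Coalgebra.counit Coalgebra.comul n Y b)
          else 0) := by
    intro E hE
    rw [DeltaE_mul, Delta_inv R H Coalgebra.counit Coalgebra.comul n E a,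
      Delta_inv R H Coalgebra.counit Coalgebra.comul n E b, Finset.sum_mul_sum,
      Finset.smul_sum,
      sum_powerset_extend (Finset.mem_powerset.1 hE)]
    refine Finset.sum_congr rfl ?_
    intro Λ _
    by_cases hΛE : Λ ⊆ E
    · rw [if_pos hΛE, Finset.smul_sum, sum_powerset_extend (Finset.mem_powerset.1 hE)]
      refine Finset.sum_congr rfl ?_
      intro Y _
      by_cases hYE : Y ⊆ E
      · rw [if_pos hYE, if_pos (Finset.union_subset hΛE hYE)]
      · rw [if_neg hYE, if_neg (fun h => hYE (Finset.union_subset_iff.1 h).2)]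
    · rw [if_neg hΛE, eq_comm, Finset.sum_eq_zero]
      intro Y _
      rw [if_neg (fun h => hΛE (Finset.union_subset_iff.1 h).1)]
  conv_lhs => rw [deltaE]
  rw [LinearMap.sum_apply]
  simp only [LinearMap.smul_apply]
  rw [Finset.sum_congr rfl expand, Finset.sum_comm]
  refine Finset.sum_congr rfl ?_
  intro Λ hΛ
  rw [Finset.sum_comm]
  refine Finset.sum_congr rfl ?_
  intro Y hY
  have hsub : Λ ∪ Y ⊆ Φ :=
    Finset.union_subset (Finset.mem_powerset.1 hΛ) (Finset.mem_powerset.1 hY)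
  have h1 : (∑ E ∈ Φ.powerset, if Λ ∪ Y ⊆ E then
      ((-1 : ℤ) ^ (Φ.card - E.card)) •
        (deltaE R H Coalgebra.counit Coalgebra.comul n Λ a *
          deltaE R H Coalgebra.counit Coalgebra.comul n Y b)
      else 0)
      = (∑ E ∈ Φ.powerset, if Λ ∪ Y ⊆ E then ((-1 : ℤ) ^ (Φ.card - E.card)) else 0) •
        (deltaE R H Coalgebra.counit Coalgebra.comul n Λ a *
          deltaE R H Coalgebra.counit Coalgebra.comul n Y b) := by
    rw [Finset.sum_smul]
    refine Finset.sum_congr rfl ?_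
    intro E _
    split
    · rfl
    · rw [zero_smul]
  rw [h1, sum_interval_two (Λ ∪ Y) Φ hsub _ (fun C _ _ => rfl)]
  split
  · rw [one_smul]
  · rw [zero_smul]

end Aux8

/-- for nonempty `Φ`,
`δ_Φ(ab − ba) = Σ_{Λ ∪ Y = Φ, Λ ∩ Y ≠ ∅} (δ_Λ(a) δ_Y(b) − δ_Y(b) δ_Λ(a))`. -/
theorem statement4 (R H : Type u) [CommRing R] [Ring H] [HopfAlgebra R H]
    (n : ℕ) (Φ : Finset (Fin n)) (hΦ : Φ.Nonempty) (a b : H) :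
    deltaE R H Coalgebra.counit Coalgebra.comul n Φ (a * b - b * a) =
      ∑ Λ ∈ Φ.powerset, ∑ Y ∈ Φ.powerset,
        if Λ ∪ Y = Φ ∧ (Λ ∩ Y).Nonempty then
          deltaE R H Coalgebra.counit Coalgebra.comul n Λ a *
              deltaE R H Coalgebra.counit Coalgebra.comul n Y b -
            deltaE R H Coalgebra.counit Coalgebra.comul n Y b *
              deltaE R H Coalgebra.counit Coalgebra.comul n Λ a
        else 0 := by
  have hswap : (∑ Λ ∈ Φ.powerset, ∑ Y ∈ Φ.powerset,
      if Λ ∪ Y = Φ then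
        deltaE R H Coalgebra.counit Coalgebra.comul n Λ b *
          deltaE R H Coalgebra.counit Coalgebra.comul n Y a
      else 0)
      = ∑ Λ ∈ Φ.powerset, ∑ Y ∈ Φ.powerset,
          if Λ ∪ Y = Φ then
            deltaE R H Coalgebra.counit Coalgebra.comul n Y b *
              deltaE R H Coalgebra.counit Coalgebra.comul n Λ a
          else 0 := by
    rw [Finset.sum_comm]
    refine Finset.sum_congr rfl fun Λ _ => Finset.sum_congr rfl fun Y _ => ?_
    rw [Finset.union_comm Y Λ]
  rw [map_sub, prod_formula R H n Φ a b, prod_formula R H n Φ b a, hswap,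
    ← Finset.sum_sub_distrib]
  refine Finset.sum_congr rfl ?_
  intro Λ hΛ
  rw [← Finset.sum_sub_distrib]
  refine Finset.sum_congr rfl ?_
  intro Y hY
  by_cases hc : Λ ∪ Y = Φ
  · rw [if_pos hc, if_pos hc]
    by_cases hne : (Λ ∩ Y).Nonempty
    · rw [if_pos ⟨hc, hne⟩]
    · rw [if_neg (fun h => hne h.2)]
      have hdisj : Disjoint Λ Y := Finset.disjoint_iff_inter_eq_empty.2
        (Finset.not_nonempty_iff_eq_empty.1 hne)
      have hcomm :
          deltaE R H Coalgebra.counit Coalgebra.comul n Λ a *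
            deltaE R H Coalgebra.counit Coalgebra.comul n Y b
          = deltaE R H Coalgebra.counit Coalgebra.comul n Y b *
            deltaE R H Coalgebra.counit Coalgebra.comul n Λ a :=
        Supp_comm R H n Λ Y hdisj _
          (deltaE_mem_Supp R H Coalgebra.counit Coalgebra.comul n Λ a) _
          (deltaE_mem_Supp R H Coalgebra.counit Coalgebra.comul n Y b)
      rw [hcomm, sub_self]
  · rw [if_neg hc, if_neg hc, if_neg (fun h => hc h.1), sub_zero]
end
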